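/- arXiv:1409.3524 — 2 statements merged into one kernel-verified Lean document; each statement's English description precedes it below -/
import Mathlib

section
/- Let k be a squarefree positive integer. There is a bijection between the set of triples (m₁,m₂,m₃) of positive integers such that gcd(m₁m₂m₃, k) = k, and the set of sextuples ((k₁,n₁),(k₂,n₂),(k₃,n₃)) of positive integers such that each kᵢ divides k, k divides k₁k₂k₃, and gcd(nᵢ, k/kᵢ) = 1 for i = 1,2,3; the bijection is given by kᵢ = gcd(mᵢ, k) and mᵢ = kᵢ nᵢ. -/
/-- The set of triples `(m₁,m₂,m₃)` of positive integers with `gcd(m₁m₂m₃,k) = k`. -/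
def tripleSet (k : ℕ) : Set (ℕ × ℕ × ℕ) :=
  {m | 0 < m.1 ∧ 0 < m.2.1 ∧ 0 < m.2.2 ∧ Nat.gcd (m.1 * m.2.1 * m.2.2) k = k}

/-- The set of sextuples `((k₁,n₁),(k₂,n₂),(k₃,n₃))` with `kᵢ | k`, `k | k₁k₂k₃`,
`nᵢ > 0` and `gcd(nᵢ, k/kᵢ) = 1`. -/
def sextupleSet (k : ℕ) : Set ((ℕ × ℕ) × (ℕ × ℕ) × (ℕ × ℕ)) :=
  {t | (t.1.1 ∣ k ∧ t.2.1.1 ∣ k ∧ t.2.2.1 ∣ k) ∧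
       k ∣ t.1.1 * t.2.1.1 * t.2.2.1 ∧
       (0 < t.1.2 ∧ 0 < t.2.1.2 ∧ 0 < t.2.2.2) ∧
       Nat.gcd t.1.2 (k / t.1.1) = 1 ∧ Nat.gcd t.2.1.2 (k / t.2.1.1) = 1 ∧
       Nat.gcd t.2.2.2 (k / t.2.2.1) = 1}

/-- The map `mᵢ ↦ (kᵢ, nᵢ) = (gcd(mᵢ,k), mᵢ/gcd(mᵢ,k))`. -/
def tripleToSextuple (k : ℕ) (m : ℕ × ℕ × ℕ) : (ℕ × ℕ) × (ℕ × ℕ) × (ℕ × ℕ) :=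
  ((Nat.gcd m.1 k, m.1 / Nat.gcd m.1 k),
   (Nat.gcd m.2.1 k, m.2.1 / Nat.gcd m.2.1 k),
   (Nat.gcd m.2.2 k, m.2.2 / Nat.gcd m.2.2 k))

/-- For squarefree `k`, the map `(m₁,m₂,m₃) ↦ ((k₁,n₁),(k₂,n₂),(k₃,n₃))` with
`kᵢ = gcd(mᵢ,k)`, `mᵢ = kᵢnᵢ` is a bijection between the two sets. -/
theorem tripleToSextuple_bijOn (k : ℕ) (hk : Squarefree k) :
    Set.BijOn (tripleToSextuple k) (tripleSet k) (sextupleSet k) := by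
  have hk0 : 0 < k := hk.ne_zero.bot_lt
  -- key: for squarefree k, if k ∣ a*b*c then k ∣ gcd a k * gcd b k * gcd c k
  have key : ∀ a b c : ℕ, k ∣ a * b * c →
      k ∣ Nat.gcd a k * Nat.gcd b k * Nat.gcd c k := by
    intro a b c hdvd
    rw [Nat.dvd_iff_prime_pow_dvd_dvd]
    intro p j hp hpj
    rcases Nat.eq_zero_or_pos j with rfl | hj
    · simp
    have hpk : p ∣ k := dvd_trans (dvd_pow_self p hj.ne') hpj
    have hj1 : j = 1 := by
      by_contra h
      have h2 : p ^ 2 ∣ k := dvd_trans (pow_dvd_pow p (by omega)) hpj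
      exact hp.not_isUnit (hk p (by simpa [sq] using h2))
    subst hj1
    have hpabc : p ∣ a * b * c := dvd_trans hpk hdvd
    simp only [pow_one]
    rcases hp.dvd_mul.mp hpabc with hab | h
    · rcases hp.dvd_mul.mp hab with h | h
      · exact Dvd.dvd.mul_right (Dvd.dvd.mul_right (Nat.dvd_gcd h hpk) _) _
      · exact Dvd.dvd.mul_right (Dvd.dvd.mul_left (Nat.dvd_gcd h hpk) _) _
    · exact Dvd.dvd.mul_left (Nat.dvd_gcd h hpk) _
  constructor
  · -- maps to
    rintro ⟨a, b, c⟩ ⟨ha, hb, hc, hg⟩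
    have hga : 0 < Nat.gcd a k := Nat.gcd_pos_of_pos_left _ ha
    have hgb : 0 < Nat.gcd b k := Nat.gcd_pos_of_pos_left _ hb
    have hgc : 0 < Nat.gcd c k := Nat.gcd_pos_of_pos_left _ hc
    refine ⟨⟨Nat.gcd_dvd_right _ _, Nat.gcd_dvd_right _ _, Nat.gcd_dvd_right _ _⟩,
      key a b c (hg ▸ Nat.gcd_dvd_left _ _), ?_, ?_, ?_, ?_⟩
    · exact ⟨Nat.div_pos (Nat.le_of_dvd ha (Nat.gcd_dvd_left _ _)) hga,
        Nat.div_pos (Nat.le_of_dvd hb (Nat.gcd_dvd_left _ _)) hgb,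
        Nat.div_pos (Nat.le_of_dvd hc (Nat.gcd_dvd_left _ _)) hgc⟩
    · exact Nat.coprime_div_gcd_div_gcd hga
    · exact Nat.coprime_div_gcd_div_gcd hgb
    · exact Nat.coprime_div_gcd_div_gcd hgc
  constructor
  · -- injective
    rintro ⟨a, b, c⟩ ⟨ha, _, _, _⟩ ⟨a', b', c'⟩ ⟨ha', _, _, _⟩ heq
    simp only [tripleToSextuple, Prod.mk.injEq] at heq
    obtain ⟨⟨h1, h2⟩, ⟨h3, h4⟩, h5, h6⟩ := heq
    have e1 : a = a' := by
      rw [← Nat.div_mul_cancel (Nat.gcd_dvd_left a k), h2, h1,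
        Nat.div_mul_cancel (Nat.gcd_dvd_left a' k)]
    have e2 : b = b' := by
      rw [← Nat.div_mul_cancel (Nat.gcd_dvd_left b k), h4, h3,
        Nat.div_mul_cancel (Nat.gcd_dvd_left b' k)]
    have e3 : c = c' := by
      rw [← Nat.div_mul_cancel (Nat.gcd_dvd_left c k), h6, h5,
        Nat.div_mul_cancel (Nat.gcd_dvd_left c' k)]
    simp [e1, e2, e3]
  · -- surjective onto
    rintro ⟨⟨k1, n1⟩, ⟨k2, n2⟩, ⟨k3, n3⟩⟩
      ⟨⟨hd1, hd2, hd3⟩, hkd, ⟨hn1, hn2, hn3⟩, hc1, hc2, hc3⟩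
    have hk1 : 0 < k1 := Nat.pos_of_dvd_of_pos hd1 hk0
    have hk2 : 0 < k2 := Nat.pos_of_dvd_of_pos hd2 hk0
    have hk3 : 0 < k3 := Nat.pos_of_dvd_of_pos hd3 hk0
    have gcd_eq : ∀ ki ni : ℕ, ki ∣ k → Nat.gcd ni (k / ki) = 1 →
        Nat.gcd (ki * ni) k = ki := by
      intro ki ni hdi hci
      conv_lhs => rw [← Nat.mul_div_cancel' hdi]
      rw [Nat.gcd_mul_left, hci, mul_one]
    have g1 := gcd_eq k1 n1 hd1 hc1
    have g2 := gcd_eq k2 n2 hd2 hc2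
    have g3 := gcd_eq k3 n3 hd3 hc3
    refine ⟨(k1 * n1, k2 * n2, k3 * n3), ⟨Nat.mul_pos hk1 hn1, Nat.mul_pos hk2 hn2,
      Nat.mul_pos hk3 hn3, ?_⟩, ?_⟩
    · exact Nat.gcd_eq_right (dvd_trans hkd (by
        exact mul_dvd_mul (mul_dvd_mul (dvd_mul_right _ _) (dvd_mul_right _ _))
          (dvd_mul_right _ _)))
    · simp [tripleToSextuple, g1, g2, g3, Nat.mul_div_cancel_left _ hk1,
        Nat.mul_div_cancel_left _ hk2, Nat.mul_div_cancel_left _ hk3]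
end

section
/- Let k be squarefree, k₁ a divisor of k, and suppose Re(w) > 1. Then ∑_{n ≥ 1, gcd(n, k/k₁) = 1, gcd(n, qh/k) = 1} R_k(k₁ n) ψ(n) / n^w = μ(k) μ(k₁) φ(k₁) · L_{(q/k₁)h}(w, ψ), where L_{M}(w,ψ) denotes the Dirichlet L-function of the character ψ with the Euler factors at primes dividing M removed. -/
open Complex Finset ArithmeticFunction
open scoped ArithmeticFunction.Moebius

/-- The Ramanujan sum `R_k(n)`. -/
noncomputable def ramanujanSum (k : ℕ) (n : ℤ) : ℂ :=
  ∑ a ∈ (Finset.range k).filter (fun a => Nat.gcd a k = 1),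
    Complex.exp (2 * Real.pi * Complex.I * a * n / k)



lemma sum_exp_eq (k : ℕ) (hk : k ≠ 0) (m : ℤ) :
    ∑ a ∈ Finset.range k, Complex.exp (2 * Real.pi * Complex.I * a * m / k)
      = if (k : ℤ) ∣ m then (k : ℂ) else 0 := by
  have hkC : (k : ℂ) ≠ 0 := Nat.cast_ne_zero.mpr hk
  have hterm : ∀ a : ℕ, Complex.exp (2 * Real.pi * Complex.I * a * m / k)
      = Complex.exp (2 * Real.pi * Complex.I * m / k) ^ a := by
    intro a
    rw [← Complex.exp_nat_mul]
    congr 1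
    ring
  simp_rw [hterm]
  have hpow : Complex.exp (2 * Real.pi * Complex.I * m / k) ^ k = 1 := by
    rw [← Complex.exp_nat_mul]
    have h1 : (k : ℂ) * (2 * Real.pi * Complex.I * m / k) = m * (2 * Real.pi * Complex.I) := by
      field_simp
    rw [h1]
    exact Complex.exp_int_mul_two_pi_mul_I m
  by_cases hdvd : (k : ℤ) ∣ m
  · obtain ⟨c, rfl⟩ := hdvd
    have h1 : Complex.exp (2 * Real.pi * Complex.I * ((k : ℤ) * c : ℤ) / k) = 1 := by
      have h2 : (2 * Real.pi * Complex.I * ((k : ℤ) * c : ℤ) / k : ℂ)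
          = (c : ℂ) * (2 * Real.pi * Complex.I) := by
        push_cast
        field_simp
      rw [h2]
      exact Complex.exp_int_mul_two_pi_mul_I c
    rw [if_pos ⟨c, rfl⟩, h1]
    simp
  · rw [if_neg hdvd]
    have hζ : Complex.exp (2 * Real.pi * Complex.I * m / k) ≠ 1 := by
      intro hone
      obtain ⟨n, hn⟩ := Complex.exp_eq_one_iff.mp hone
      apply hdvd
      refine ⟨n, ?_⟩
      have h2πI : (2 * (Real.pi : ℂ) * Complex.I) ≠ 0 := by
        simp [Real.pi_ne_zero, Complex.I_ne_zero]
      have hmc : (m : ℂ) = (k : ℂ) * n := by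
        field_simp at hn
        have h3 : (2 * (Real.pi : ℂ) * Complex.I) * (m : ℂ)
            = (2 * (Real.pi : ℂ) * Complex.I) * ((k : ℂ) * n) := by
          rw [hn]
        exact mul_left_cancel₀ h2πI h3
      exact_mod_cast hmc
    rw [geom_sum_eq hζ, hpow]
    simp

lemma sum_moebius_indicator (g : ℕ) :
    (∑ d ∈ g.divisors, (μ d : ℂ)) = if g = 1 then 1 else 0 := by
  have h := congrArg (fun f : ArithmeticFunction ℤ => f g)
    ArithmeticFunction.moebius_mul_coe_zeta
  simp only [ArithmeticFunction.coe_mul_zeta_apply, ArithmeticFunction.one_apply] at h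
  have : ((∑ d ∈ g.divisors, μ d : ℤ) : ℂ) = ((if g = 1 then 1 else 0 : ℤ) : ℂ) := by
    exact_mod_cast congrArg (fun z : ℤ => (z : ℂ)) h
  simpa [apply_ite (fun z : ℤ => (z : ℂ))] using this

lemma sum_range_filter_dvd (k d : ℕ) (hd : d ∣ k) (hd0 : d ≠ 0) (f : ℕ → ℂ) :
    ∑ a ∈ (Finset.range k).filter (fun a => d ∣ a), f a
      = ∑ b ∈ Finset.range (k / d), f (d * b) := by
  refine Finset.sum_nbij' (fun a => a / d) (fun b => d * b) ?_ ?_ ?_ ?_ ?_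
  · intro a ha
    simp only [Finset.mem_filter, Finset.mem_range] at ha ⊢
    exact Nat.div_lt_div_of_lt_of_dvd hd ha.1
  · intro b hb
    simp only [Finset.mem_range] at hb ⊢
    refine Finset.mem_filter.mpr ⟨Finset.mem_range.mpr ?_, Dvd.intro b rfl⟩
    calc d * b < d * (k / d) := (Nat.mul_lt_mul_left (Nat.pos_of_ne_zero hd0)).mpr hb
    _ = k := Nat.mul_div_cancel' hd
  · intro a ha
    simp only [Finset.mem_filter] at ha
    exact Nat.mul_div_cancel' ha.2
  · intro b _
    exact Nat.mul_div_cancel_left b (Nat.pos_of_ne_zero hd0)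
  · intro a ha
    simp only [Finset.mem_filter] at ha
    rw [Nat.mul_div_cancel' ha.2]

lemma ramanujanSum_eq_sum_divisors (k : ℕ) (hk : k ≠ 0) (m : ℤ) :
    ramanujanSum k m = ∑ d ∈ k.divisors,
      (μ d : ℂ) * (if ((k / d : ℕ) : ℤ) ∣ m then ((k / d : ℕ) : ℂ) else 0) := by
  have step1 : ramanujanSum k m = ∑ a ∈ Finset.range k,
      (if Nat.gcd a k = 1 then (1 : ℂ) else 0)
        * Complex.exp (2 * Real.pi * Complex.I * a * m / k) := by
    rw [ramanujanSum, Finset.sum_filter]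
    refine Finset.sum_congr rfl fun a _ => ?_
    split <;> simp
  have step2 : ∀ a : ℕ, (if Nat.gcd a k = 1 then (1 : ℂ) else 0)
      = ∑ d ∈ k.divisors, (if d ∣ a then (μ d : ℂ) else 0) := by
    intro a
    have hset : k.divisors.filter (fun d => d ∣ a) = (Nat.gcd a k).divisors := by
      ext d
      have hg : Nat.gcd a k ≠ 0 := Nat.gcd_ne_zero_right hk
      simp [Nat.mem_divisors, Nat.dvd_gcd_iff, hk, hg, and_comm]
    rw [← Finset.sum_filter, hset, sum_moebius_indicator]
  simp_rw [step1, step2, Finset.sum_mul]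
  rw [Finset.sum_comm]
  refine Finset.sum_congr rfl fun d hd => ?_
  obtain ⟨hdk, -⟩ := Nat.mem_divisors.mp hd
  have hd0 : d ≠ 0 := fun h => hk (by simpa [h, Nat.zero_dvd] using hdk)
  have hkd0 : k / d ≠ 0 := Nat.div_ne_zero_iff_of_dvd hdk |>.mpr ⟨hk, hd0⟩
  have hcast : ((k / d : ℕ) : ℂ) * (d : ℂ) ≠ 0 := by
    simp [Nat.cast_ne_zero, hd0, hkd0]
  calc ∑ a ∈ Finset.range k, (if d ∣ a then (μ d : ℂ) else 0)
        * Complex.exp (2 * Real.pi * Complex.I * a * m / k)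
      = ∑ a ∈ (Finset.range k).filter (fun a => d ∣ a),
        (μ d : ℂ) * Complex.exp (2 * Real.pi * Complex.I * a * m / k) := by
        rw [Finset.sum_filter]
        refine Finset.sum_congr rfl fun a _ => ?_
        split <;> simp
    _ = (μ d : ℂ) * ∑ a ∈ (Finset.range k).filter (fun a => d ∣ a),
        Complex.exp (2 * Real.pi * Complex.I * a * m / k) := by
        rw [Finset.mul_sum]
    _ = (μ d : ℂ) * ∑ b ∈ Finset.range (k / d),
        Complex.exp (2 * Real.pi * Complex.I * b * m / (k / d : ℕ)) := by
        rw [sum_range_filter_dvd k d hdk hd0]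
        congr 1
        refine Finset.sum_congr rfl fun b _ => ?_
        congr 1
        have hkdd : ((k / d : ℕ) : ℂ) * (d : ℂ) = (k : ℂ) := by
          exact_mod_cast Nat.div_mul_cancel hdk
        rw [← hkdd]
        push_cast
        rw [mul_comm ((k / d : ℕ) : ℂ) (d : ℂ)]
        rw [div_eq_div_iff (by rw [mul_comm]; exact hcast)
          (Nat.cast_ne_zero.mpr hkd0)]
        ring
    _ = (μ d : ℂ) * (if ((k / d : ℕ) : ℤ) ∣ m then ((k / d : ℕ) : ℂ) else 0) := by
        rw [sum_exp_eq (k / d) hkd0 m]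


lemma totient_eq_moebius_sum (n : ℕ) (hn : n ≠ 0) :
    ∑ e ∈ n.divisors, (μ (n / e) : ℂ) * (e : ℂ) = (Nat.totient n : ℂ) := by
  have key := (ArithmeticFunction.sum_eq_iff_sum_mul_moebius_eq (R := ℂ)
      (f := fun i => (Nat.totient i : ℂ)) (g := fun i => (i : ℂ))).mp
    (fun m _ => by exact_mod_cast congrArg (fun z : ℕ => (z : ℂ)) (Nat.sum_totient m))
    n (Nat.pos_of_ne_zero hn)
  rw [← key, Nat.sum_divisorsAntidiagonal' (f := fun x y => (μ x : ℂ) * (y : ℂ))]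

-- for e ∣ k squarefree, k₁ ∣ k, gcd n (k/k₁) = 1 : e ∣ k₁ * n ↔ e ∣ k₁
lemma dvd_k₁_iff (k k₁ n e : ℕ) (hk : Squarefree k) (hk₁ : k₁ ∣ k) (he : e ∣ k)
    (hn : Nat.gcd n (k / k₁) = 1) : e ∣ k₁ * n ↔ e ∣ k₁ := by
  constructor
  · intro hmul
    set g := Nat.gcd e k₁ with hg
    have hge : g ∣ e := Nat.gcd_dvd_left _ _
    obtain ⟨e₂, he₂⟩ : g ∣ e := hge
    have hsf_e : Squarefree e := hk.squarefree_of_dvd he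
    have hcop : Nat.Coprime g e₂ := by
      rw [he₂] at hsf_e
      exact (Nat.squarefree_mul_iff.mp hsf_e).1
    have hcop2 : Nat.Coprime e₂ k₁ := by
      have h1 : Nat.gcd e₂ k₁ ∣ g := Nat.dvd_gcd
        (dvd_trans (Nat.gcd_dvd_left _ _) (he₂ ▸ dvd_mul_left e₂ g)) (Nat.gcd_dvd_right _ _)
      have h2 : Nat.gcd e₂ k₁ ∣ e₂ := Nat.gcd_dvd_left _ _
      have := Nat.dvd_gcd h1 h2
      rw [hcop] at this
      exact Nat.eq_one_of_dvd_one this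
    have he₂n : e₂ ∣ n := by
      have he₂mul : e₂ ∣ k₁ * n := dvd_trans (he₂ ▸ dvd_mul_left e₂ g) hmul
      exact (Nat.Coprime.dvd_of_dvd_mul_left hcop2 he₂mul)
    have he₂k : e₂ ∣ k / k₁ := by
      have hkfac : k = k₁ * (k / k₁) := (Nat.mul_div_cancel' hk₁).symm
      have : e₂ ∣ k₁ * (k / k₁) := hkfac ▸ dvd_trans (he₂ ▸ dvd_mul_left e₂ g) he
      exact Nat.Coprime.dvd_of_dvd_mul_left hcop2 this
    have : e₂ ∣ 1 := hn ▸ Nat.dvd_gcd he₂n he₂k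
    have he₂1 : e₂ = 1 := Nat.eq_one_of_dvd_one this
    rw [he₂, he₂1, mul_one]
    exact Nat.gcd_dvd_right _ _
  · intro h; exact h.mul_right n

lemma ramanujanSum_eval (k k₁ n : ℕ) (hk : Squarefree k) (hk₁ : k₁ ∣ k)
    (hn : Nat.gcd n (k / k₁) = 1) :
    ramanujanSum k ((k₁ * n : ℕ) : ℤ) = (μ k : ℂ) * (μ k₁ : ℂ) * (Nat.totient k₁ : ℂ) := by
  have hk0 : k ≠ 0 := hk.ne_zero
  have hk₁0 : k₁ ≠ 0 := fun h => hk0 (by simpa [h] using hk₁)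
  have hsf₁ : Squarefree k₁ := hk.squarefree_of_dvd hk₁
  have hcopk : Nat.Coprime k₁ (k / k₁) := by
    have : Squarefree (k₁ * (k / k₁)) := by rwa [Nat.mul_div_cancel' hk₁]
    exact (Nat.squarefree_mul_iff.mp this).1
  rw [ramanujanSum_eq_sum_divisors k hk0]
  rw [← Nat.sum_div_divisors k (fun d => (μ d : ℂ) *
      (if ((k / d : ℕ) : ℤ) ∣ ((k₁ * n : ℕ) : ℤ) then ((k / d : ℕ) : ℂ) else 0))]
  have step1 : ∀ e ∈ k.divisors, (μ (k / e) : ℂ) *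
      (if ((k / (k / e) : ℕ) : ℤ) ∣ ((k₁ * n : ℕ) : ℤ) then ((k / (k / e) : ℕ) : ℂ) else 0)
      = if e ∣ k₁ then (μ (k / e) : ℂ) * e else 0 := by
    intro e he
    obtain ⟨hek, -⟩ := Nat.mem_divisors.mp he
    rw [Nat.div_div_self hek hk0]
    have hcond : ((e : ℕ) : ℤ) ∣ ((k₁ * n : ℕ) : ℤ) ↔ e ∣ k₁ := by
      rw [Int.natCast_dvd_natCast]
      exact dvd_k₁_iff k k₁ n e hk hk₁ hek hn
    by_cases hcase : e ∣ k₁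
    · rw [if_pos (hcond.mpr hcase), if_pos hcase]
    · rw [if_neg (fun hh => hcase (hcond.mp hh)), if_neg hcase, mul_zero]
  rw [Finset.sum_congr rfl step1, ← Finset.sum_filter]
  have hsetk₁ : k.divisors.filter (fun e => e ∣ k₁) = k₁.divisors := by
    ext e
    simp only [Finset.mem_filter, Nat.mem_divisors]
    exact ⟨fun h => ⟨h.2, hk₁0⟩, fun h => ⟨⟨h.1.trans hk₁, hk0⟩, h.1⟩⟩
  rw [hsetk₁]
  have step2 : ∀ e ∈ k₁.divisors, (μ (k / e) : ℂ) * (e : ℂ)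
      = (μ (k / k₁) : ℂ) * ((μ (k₁ / e) : ℂ) * (e : ℂ)) := by
    intro e he
    obtain ⟨hek₁, -⟩ := Nat.mem_divisors.mp he
    have hfac : k / e = (k / k₁) * (k₁ / e) := by
      rw [Nat.div_mul_div_comm hk₁ hek₁, mul_comm k k₁,
        Nat.mul_div_mul_left _ _ (Nat.pos_of_ne_zero hk₁0)]
    have hcop : Nat.Coprime (k / k₁) (k₁ / e) :=
      Nat.Coprime.coprime_dvd_right (Nat.div_dvd_of_dvd hek₁) hcopk.symm
    rw [hfac, isMultiplicative_moebius.map_mul_of_coprime hcop]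
    push_cast
    ring
  rw [Finset.sum_congr rfl step2, ← Finset.mul_sum, totient_eq_moebius_sum k₁ hk₁0]
  have hmu : (μ (k / k₁) : ℂ) = (μ k : ℂ) * (μ k₁ : ℂ) := by
    have hfack : k = k₁ * (k / k₁) := (Nat.mul_div_cancel' hk₁).symm
    have hmuk : μ k = μ k₁ * μ (k / k₁) := by
      conv_lhs => rw [hfack]
      exact isMultiplicative_moebius.map_mul_of_coprime hcopk
    have hsq : (μ k₁ : ℂ) * (μ k₁ : ℂ) = 1 := by
      rcases ArithmeticFunction.moebius_eq_or k₁ with h | h | h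
      · exact absurd (ArithmeticFunction.moebius_ne_zero_iff_squarefree.mpr hsf₁) (by simp [h])
      · simp [h]
      · simp [h]
    rw [hmuk]
    push_cast
    linear_combination (-(μ (k / k₁) : ℂ)) * hsq
  rw [hmu]

/-- For `k` squarefree, `k₁ | k`, `hk | q` (`q` squarefree) and `Re(w) > 1`,
`∑_{n, (n,k/k₁)=1, (n,qh/k)=1} R_k(k₁n) ψ(n) n^{-w} = μ(k)μ(k₁)φ(k₁) L_{(q/k₁)h}(w,ψ)`,
where the `L`-function with removed Euler factors is its Dirichlet series restricted to
`n` coprime to `(q/k₁)h` (valid in the region of absolute convergence). -/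
theorem ramanujanSum_twisted_series (q h k k₁ : ℕ) (hq : Squarefree q) (hk : Squarefree k)
    (hhk : h * k ∣ q) (hk₁ : k₁ ∣ k) (ψ : DirichletCharacter ℂ q) (w : ℂ) (hw : 1 < w.re) :
    (∑' n : ℕ+, if Nat.gcd (n : ℕ) (k / k₁) = 1 ∧ Nat.gcd (n : ℕ) (q * h / k) = 1 then
        ramanujanSum k (k₁ * (n : ℕ)) * ψ ((n : ℕ) : ZMod q) / (n : ℂ) ^ w else 0) =
      (μ k : ℂ) * (μ k₁ : ℂ) * (Nat.totient k₁ : ℂ) *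
        ∑' n : ℕ+, if Nat.gcd (n : ℕ) (q / k₁ * h) = 1 then
          ψ ((n : ℕ) : ZMod q) / (n : ℂ) ^ w else 0 := by
  have hk0 : k ≠ 0 := hk.ne_zero
  have hk₁0 : k₁ ≠ 0 := fun hh => hk0 (by simpa [hh] using hk₁)
  have hkq : k ∣ q := (dvd_mul_left k h).trans hhk
  obtain ⟨c, hc⟩ := hkq
  obtain ⟨k₂, hk2⟩ := hk₁
  have h1 : k / k₁ = k₂ := by
    rw [hk2, Nat.mul_div_cancel_left _ (Nat.pos_of_ne_zero hk₁0)]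
  have h2 : q * h / k = c * h := by
    rw [hc, mul_assoc, Nat.mul_div_cancel_left _ (Nat.pos_of_ne_zero hk0)]
  have h3 : q / k₁ * h = k₂ * (c * h) := by
    rw [hc, hk2, mul_assoc, Nat.mul_div_cancel_left _ (Nat.pos_of_ne_zero hk₁0)]
    ring
  have hcond : ∀ n : ℕ, (Nat.gcd n (k / k₁) = 1 ∧ Nat.gcd n (q * h / k) = 1)
      ↔ Nat.gcd n (q / k₁ * h) = 1 := by
    intro n
    rw [h1, h2, h3]
    exact (Nat.coprime_mul_iff_right).symm
  have hsum : ∀ n : ℕ+,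
      (if Nat.gcd (n : ℕ) (k / k₁) = 1 ∧ Nat.gcd (n : ℕ) (q * h / k) = 1 then
        ramanujanSum k (k₁ * (n : ℕ)) * ψ ((n : ℕ) : ZMod q) / (n : ℂ) ^ w else 0)
      = (μ k : ℂ) * (μ k₁ : ℂ) * (Nat.totient k₁ : ℂ) *
        (if Nat.gcd (n : ℕ) (q / k₁ * h) = 1 then
          ψ ((n : ℕ) : ZMod q) / (n : ℂ) ^ w else 0) := by
    intro n
    by_cases hcase : Nat.gcd (n : ℕ) (q / k₁ * h) = 1
    · rw [if_pos ((hcond (n : ℕ)).mpr hcase), if_pos hcase]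
      have hn1 : Nat.gcd (n : ℕ) (k / k₁) = 1 := ((hcond (n : ℕ)).mpr hcase).1
      have := ramanujanSum_eval k k₁ (n : ℕ) hk ⟨k₂, hk2⟩ hn1
      push_cast at this ⊢
      rw [this]
      ring
    · rw [if_neg (fun hh => hcase ((hcond (n : ℕ)).mp hh)), if_neg hcase, mul_zero]
  rw [tsum_congr hsum, tsum_mul_left]
end
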